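/- Let μ ∈ ℝ^p be nonzero and Σ a symmetric positive definite p×p matrix. Fix r ≥ 0 and R > 0. Then the portfolio w* = (R / √(μᵀΣ⁻¹μ)) Σ⁻¹μ satisfies the risk constraint w*ᵀΣw* ≤ R², and for every w ∈ ℝ^p with w ≠ 0 and wᵀΣw ≤ R², one has (wᵀμ - r)/√(wᵀΣw) ≤ (w*ᵀμ - r)/√(w*ᵀΣw*) = √(μᵀΣ⁻¹μ) - r/R. -/

import Mathlib

open Matrix

private lemma symm_bilin {p : ℕ} (S : Matrix (Fin p) (Fin p) ℝ) (hS : S.IsHermitian)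
    (x y : Fin p → ℝ) : x ⬝ᵥ S *ᵥ y = y ⬝ᵥ S *ᵥ x := by
  rw [Matrix.dotProduct_mulVec, ← Matrix.mulVec_transpose,
    show Sᵀ = S from hS, dotProduct_comm]

private lemma cs_bilin {p : ℕ} (S : Matrix (Fin p) (Fin p) ℝ) (hS : S.PosDef)
    (x y : Fin p → ℝ) : (x ⬝ᵥ S *ᵥ y) ^ 2 ≤ (x ⬝ᵥ S *ᵥ x) * (y ⬝ᵥ S *ᵥ y) := by
  have key : ∀ t : ℝ, 0 ≤ (y ⬝ᵥ S *ᵥ y) * (t * t) + (2 * (x ⬝ᵥ S *ᵥ y)) * t + x ⬝ᵥ S *ᵥ x := by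
    intro t
    have h0 := hS.posSemidef.dotProduct_mulVec_nonneg (x + t • y)
    have hsym := symm_bilin S hS.1 y x
    simp only [add_dotProduct, dotProduct_add, Matrix.mulVec_add,
      Matrix.mulVec_smul, smul_dotProduct, dotProduct_smul,
      smul_eq_mul, star_trivial] at h0 ⊢
    rw [hsym] at h0
    nlinarith [h0]
  have hd := discrim_le_zero key
  rw [discrim] at hd
  nlinarith [hd]

theorem sharpe_optimal_portfolio {p : ℕ} (μ : Fin p → ℝ) (hμ : μ ≠ 0)
    (S : Matrix (Fin p) (Fin p) ℝ) (hS : S.PosDef)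
    (r R : ℝ) (hr : 0 ≤ r) (hR : 0 < R)
    (w : Fin p → ℝ) (hw : w = (R / Real.sqrt (μ ⬝ᵥ S⁻¹ *ᵥ μ)) • (S⁻¹ *ᵥ μ)) :
    w ⬝ᵥ S *ᵥ w ≤ R ^ 2 ∧
    (w ⬝ᵥ μ - r) / Real.sqrt (w ⬝ᵥ S *ᵥ w) = Real.sqrt (μ ⬝ᵥ S⁻¹ *ᵥ μ) - r / R ∧
    ∀ v : Fin p → ℝ, v ≠ 0 → v ⬝ᵥ S *ᵥ v ≤ R ^ 2 →
      (v ⬝ᵥ μ - r) / Real.sqrt (v ⬝ᵥ S *ᵥ v) ≤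
        (w ⬝ᵥ μ - r) / Real.sqrt (w ⬝ᵥ S *ᵥ w) := by
  have hSinv : (S⁻¹).PosDef := hS.inv
  set u : Fin p → ℝ := S⁻¹ *ᵥ μ with hu
  set q : ℝ := μ ⬝ᵥ S⁻¹ *ᵥ μ with hqdef
  have hq : 0 < q := hSinv.dotProduct_mulVec_pos hμ
  set s : ℝ := Real.sqrt q with hs
  have hspos : 0 < s := Real.sqrt_pos.mpr hq
  have hs2 : s ^ 2 = q := Real.sq_sqrt hq.le
  -- S *ᵥ u = μ
  have hSu : S *ᵥ u = μ := by
    rw [hu, Matrix.mulVec_mulVec, Matrix.mul_nonsing_inv _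
      (isUnit_iff_ne_zero.mpr hS.det_pos.ne'), Matrix.one_mulVec]
  -- u ⬝ᵥ S *ᵥ u = q
  have huSu : u ⬝ᵥ S *ᵥ u = q := by
    rw [hSu, hqdef, hu, dotProduct_comm]
  have huμ : u ⬝ᵥ μ = q := by rw [← hSu, huSu]
  -- w S w
  have hwSw : w ⬝ᵥ S *ᵥ w = R ^ 2 := by
    rw [hw]
    simp only [smul_dotProduct, Matrix.mulVec_smul, dotProduct_smul,
      smul_eq_mul, ← hu, huSu]
    field_simp [← hs]
    nlinarith [hs2]
  have hwμ : w ⬝ᵥ μ = R * s := by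
    rw [hw]
    simp only [smul_dotProduct, smul_eq_mul, ← hu, huμ, ← hs]
    field_simp
    nlinarith [hs2]
  have hsqrtw : Real.sqrt (w ⬝ᵥ S *ᵥ w) = R := by
    rw [hwSw, Real.sqrt_sq hR.le]
  have hsharpe : (w ⬝ᵥ μ - r) / Real.sqrt (w ⬝ᵥ S *ᵥ w) = s - r / R := by
    rw [hsqrtw, hwμ]
    field_simp
  refine ⟨hwSw.le, hsharpe, ?_⟩
  intro v hv hvR
  rw [hsharpe]
  have hvSv : 0 < v ⬝ᵥ S *ᵥ v := hS.dotProduct_mulVec_pos hv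
  set t : ℝ := Real.sqrt (v ⬝ᵥ S *ᵥ v) with ht
  have htpos : 0 < t := Real.sqrt_pos.mpr hvSv
  have ht2 : t ^ 2 = v ⬝ᵥ S *ᵥ v := Real.sq_sqrt hvSv.le
  have htR : t ≤ R := by
    rw [ht]
    calc Real.sqrt (v ⬝ᵥ S *ᵥ v) ≤ Real.sqrt (R ^ 2) := Real.sqrt_le_sqrt hvR
    _ = R := Real.sqrt_sq hR.le
  -- Cauchy–Schwarz: v ⬝ᵥ μ ≤ t * s
  have hcs : v ⬝ᵥ μ ≤ t * s := by
    have h1 : (v ⬝ᵥ S *ᵥ u) ^ 2 ≤ (v ⬝ᵥ S *ᵥ v) * (u ⬝ᵥ S *ᵥ u) := cs_bilin S hS v u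
    rw [huSu, hSu] at h1
    nlinarith [h1, ht2, hs2, mul_pos htpos hspos]
  have key : (v ⬝ᵥ μ - r) / t ≤ s - r / R := by
    rw [div_le_iff₀ htpos]
    have h2 : r / R ≤ r / t := div_le_div_of_nonneg_left hr htpos htR
    have h3 : r / R * t ≤ r := by
      have h4 := mul_le_mul_of_nonneg_right h2 htpos.le
      rwa [div_mul_cancel₀ r htpos.ne'] at h4
    nlinarith [hcs, h3]
  exact key
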